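/- If the pair (C, A) is output-stable and exactly observable (i.e., the observability gramian G = sum_{v in F_d} A^{v*} C* C A^v is bounded and bounded below, say G >= epsilon I for some epsilon > 0), then the tuple A is strongly stable: sum over words v of length N of ||A^v x||^2 tends to 0 as N tends to infinity, for every x in X. -/

import Mathlib

open ContinuousLinearMap

noncomputable section

variable {X Y : Type*}
  [NormedAddCommGroup X] [InnerProductSpace ℂ X] [CompleteSpace X]
  [NormedAddCommGroup Y] [InnerProductSpace ℂ Y] [CompleteSpace Y]

/-- `A^v`: for a word `v = i_N … i_1` (stored as the list `[i_N, …, i_1]`), the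
product `A_{i_N} ∘ A_{i_{N-1}} ∘ ⋯ ∘ A_{i_1}`. -/
def wordProd {d : ℕ} (A : Fin d → X →L[ℂ] X) (v : List (Fin d)) : X →L[ℂ] X :=
  (v.map A).prod

/-- `A^w` for a word of length `N` encoded as a function `w : Fin N → Fin d`. -/
def funProd {d N : ℕ} (A : Fin d → X →L[ℂ] X) (w : Fin N → Fin d) : X →L[ℂ] X :=
  wordProd A (List.ofFn w)

lemma wordProd_append {d : ℕ} (A : Fin d → X →L[ℂ] X) (u v : List (Fin d)) (x : X) :
    wordProd A (u ++ v) x = wordProd A u (wordProd A v x) := by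
  simp [wordProd, List.map_append, List.prod_append, ContinuousLinearMap.mul_apply]

/-- If (C, A) is output-stable and exactly observable (the gramian is bounded below:
ε ‖x‖² ≤ ∑_v ‖C A^v x‖² for some ε > 0), then A is strongly stable. -/
theorem stmt7 {d : ℕ} (A : Fin d → X →L[ℂ] X) (C : X →L[ℂ] Y)
    (hstable : ∀ x : X, Summable fun v : List (Fin d) => ‖C (wordProd A v x)‖ ^ 2)
    (ε : ℝ) (hε : 0 < ε)
    (hlow : ∀ x : X, ε * ‖x‖ ^ 2 ≤ ∑' v : List (Fin d), ‖C (wordProd A v x)‖ ^ 2) :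
    ∀ x : X, Filter.Tendsto
      (fun N => ∑ w : Fin N → Fin d, ‖funProd A w x‖ ^ 2) Filter.atTop (nhds 0) := by
  classical
  intro x
  set f : List (Fin d) → ℝ := fun v => ‖C (wordProd A v x)‖ ^ 2 with hf_def
  have hf : Summable f := hstable x
  have hf0 : ∀ v, 0 ≤ f v := fun v => sq_nonneg _
  let F : ℕ → Finset (List (Fin d)) := fun N => (List.finite_length_lt (Fin d) N).toFinset
  have hFmem : ∀ N l, l ∈ F N ↔ l.length < N := by
    intro N l; simp [F]
  have hFmono : Monotone F := by
    intro m n hmn l hl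
    rw [hFmem] at *
    omega
  have hFtop : Filter.Tendsto F Filter.atTop Filter.atTop :=
    Filter.tendsto_atTop_finset_of_monotone hFmono fun l => ⟨l.length + 1, (hFmem _ _).2 (by omega)⟩
  -- the tail sums tend to 0
  have htail : Filter.Tendsto (fun N => ∑' l : {l : List (Fin d) // l ∉ F N}, f l)
      Filter.atTop (nhds 0) := by
    have h1 : ∀ N, (∑' l : {l : List (Fin d) // l ∉ F N}, f l)
        = (∑' v, f v) - ∑ l ∈ F N, f l := by
      intro N
      have := Summable.sum_add_tsum_subtype_compl hf (F N)
      linarith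
    simp_rw [h1]
    have h2 : Filter.Tendsto (fun N => ∑ l ∈ F N, f l) Filter.atTop (nhds (∑' v, f v)) :=
      hf.hasSum.comp hFtop
    simpa using h2.const_sub (∑' v, f v)
  -- key estimate
  have key : ∀ N, ε * (∑ w : Fin N → Fin d, ‖funProd A w x‖ ^ 2)
      ≤ ∑' l : {l : List (Fin d) // l ∉ F N}, f l := by
    intro N
    set e : (Fin N → Fin d) × List (Fin d) → List (Fin d) :=
      fun p => p.2 ++ List.ofFn p.1 with he_def
    have he : Function.Injective e := by
      rintro ⟨w1, v1⟩ ⟨w2, v2⟩ h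
      simp only [he_def] at h
      obtain ⟨h1, h2⟩ := List.append_inj' h (by simp)
      exact Prod.ext (List.ofFn_injective h2) h1
    have hmem : ∀ p, e p ∉ F N := by
      intro p
      simp only [hFmem, he_def, List.length_append, List.length_ofFn, not_lt]
      omega
    have hsum_e : Summable (f ∘ e) := hf.comp_injective he
    have hpt : ∀ w : Fin N → Fin d,
        ε * ‖funProd A w x‖ ^ 2 ≤ ∑' v : List (Fin d), f (v ++ List.ofFn w) := by
      intro w
      have h := hlow (funProd A w x)
      have heq : ∀ v : List (Fin d),
          ‖C (wordProd A v (funProd A w x))‖ ^ 2 = f (v ++ List.ofFn w) := by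
        intro v
        simp [hf_def, funProd, wordProd_append]
      calc ε * ‖funProd A w x‖ ^ 2
          ≤ ∑' v : List (Fin d), ‖C (wordProd A v (funProd A w x))‖ ^ 2 := h
        _ = ∑' v : List (Fin d), f (v ++ List.ofFn w) := by
            exact tsum_congr heq
    have hsum_fiber : ∀ w : Fin N → Fin d, Summable fun v : List (Fin d) => f (v ++ List.ofFn w) := by
      intro w
      have : Function.Injective (fun v : List (Fin d) => v ++ List.ofFn w) := by
        intro v1 v2 h
        exact (List.append_inj' h rfl).1
      exact hf.comp_injective this
    calc ε * (∑ w : Fin N → Fin d, ‖funProd A w x‖ ^ 2)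
        = ∑ w : Fin N → Fin d, ε * ‖funProd A w x‖ ^ 2 := by rw [Finset.mul_sum]
      _ ≤ ∑ w : Fin N → Fin d, ∑' v : List (Fin d), f (v ++ List.ofFn w) :=
          Finset.sum_le_sum fun w _ => hpt w
      _ = ∑' w : Fin N → Fin d, ∑' v : List (Fin d), f (v ++ List.ofFn w) :=
          (tsum_fintype _).symm
      _ = ∑' p : (Fin N → Fin d) × List (Fin d), f (e p) :=
          (Summable.tsum_prod' hsum_e fun w => hsum_fiber w).symm
      _ ≤ ∑' l : {l : List (Fin d) // l ∉ F N}, f l := by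
          refine Summable.tsum_le_tsum_of_inj (fun p => (⟨e p, hmem p⟩ :
              {l : List (Fin d) // l ∉ F N}))
            (fun p q h => he (congrArg Subtype.val h))
            (fun c _ => hf0 c) (fun p => le_rfl) hsum_e (hf.subtype _)
  -- squeeze
  have hnn : ∀ N, 0 ≤ ∑ w : Fin N → Fin d, ‖funProd A w x‖ ^ 2 :=
    fun N => Finset.sum_nonneg fun w _ => sq_nonneg _
  have hub : ∀ N, (∑ w : Fin N → Fin d, ‖funProd A w x‖ ^ 2)
      ≤ (∑' l : {l : List (Fin d) // l ∉ F N}, f l) / ε := by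
    intro N
    rw [le_div_iff₀ hε]
    linarith [key N]
  have : Filter.Tendsto (fun N => (∑' l : {l : List (Fin d) // l ∉ F N}, f l) / ε)
      Filter.atTop (nhds 0) := by
    simpa using htail.div_const ε
  exact squeeze_zero hnn hub this

end
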